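/- The Möbius function μ(0̂,1̂) of the Dowling lattice Q_n(r) equals (−1)^n (r+1)(2r+1)⋯((n−1)r+1). -/

import Mathlib

open Classical in
/-- The Möbius function of a finite poset. -/
noncomputable def mob {α : Type*} [PartialOrder α] [Finite α] (x y : α) : ℤ :=
  letI : Fintype α := Fintype.ofFinite α
  if x = y then 1
  else if x ≤ y then
    - ∑ z : α, if h : x ≤ z ∧ z < y then mob x z else 0
  else 0
termination_by (Set.Iic y).ncard
decreasing_by
  · refine Set.ncard_lt_ncard ?_ (Set.toFinite _)
    constructor
    · exact fun w hw => le_trans hw h.2.le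
    · intro hsub
      exact absurd (lt_of_le_of_lt (hsub (le_refl y)) h.2) (lt_irrefl _)

/-- The reflection arrangement `A_n(r)` in `ℂ^n`, consisting of the hyperplanes
`v_i = ζ v_j` (`1 ≤ i < j ≤ n`, `ζ^r = 1`) and `v_k = 0` (`1 ≤ k ≤ n`). -/
def arrA (n r : ℕ) : Set (Submodule ℂ (Fin n → ℂ)) :=
  {W | (∃ i j : Fin n, ∃ ζ : ℂ, i < j ∧ ζ ^ r = 1 ∧
          W = LinearMap.ker (LinearMap.proj (R := ℂ) (φ := fun _ : Fin n => ℂ) i -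
            ζ • LinearMap.proj j)) ∨
        ∃ k : Fin n, W = LinearMap.ker (LinearMap.proj (R := ℂ) (φ := fun _ : Fin n => ℂ) k)}

/-- The intersection lattice of an arrangement: all intersections of subsets of the
arrangement (including the empty intersection `ℂ^n`). -/
def interLat {n : ℕ} (A : Set (Submodule ℂ (Fin n → ℂ))) : Set (Submodule ℂ (Fin n → ℂ)) :=
  {W | ∃ S ⊆ A, W = sInf S}

namespace Dow

open Classical

theorem mob_eq_of_sum {α : Type*} [PartialOrder α] [Finite α] (b : α) (hb : ∀ x, b ≤ x)
    (g : α → ℤ)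
    (hg : ∀ x : α, (letI : Fintype α := Fintype.ofFinite α;
        ∑ y : α, (if y ≤ x then g y else 0)) = if x = b then 1 else 0) :
    ∀ x, mob b x = g x := by
  letI : Fintype α := Fintype.ofFinite α
  intro x
  induction x using WellFoundedLT.induction with
  | _ x ih =>
    have hsplit : (∑ y : α, (if y ≤ x then g y else 0))
        = (∑ y : α, (if y < x then g y else 0)) + g x := by
      have : ∀ y : α, (if y ≤ x then g y else 0)
          = (if y < x then g y else 0) + (if y = x then g y else 0) := by
        intro y
        rcases eq_or_ne y x with rfl | hyx
        · simp [lt_irrefl]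
        · by_cases hlt : y < x
          · simp [hlt, hlt.le, hyx]
          · have : ¬ y ≤ x := fun h => hlt (lt_of_le_of_ne h hyx)
            simp [this, hlt, hyx]
      rw [Finset.sum_congr rfl (fun y _ => this y), Finset.sum_add_distrib,
        Finset.sum_ite_eq' Finset.univ x g, if_pos (Finset.mem_univ x)]
    rcases eq_or_ne x b with rfl | hxb
    · have h0 := hg x
      rw [if_pos rfl, hsplit] at h0
      have hz : (∑ y : α, (if y < x then g y else 0)) = 0 := by
        apply Finset.sum_eq_zero
        intro y _
        rw [if_neg]
        exact fun (h : y < x) => absurd (hb y) h.not_ge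
      rw [hz, zero_add] at h0
      rw [mob, if_pos rfl, h0]
    · have h0 := hg x
      rw [if_neg hxb, hsplit] at h0
      have hgx : g x = - ∑ y : α, (if y < x then g y else 0) := by omega
      rw [mob, if_neg (fun h => hxb h.symm), if_pos (hb x), hgx]
      congr 1
      apply Finset.sum_congr rfl
      intro z _
      by_cases hz : z < x
      · rw [dif_pos ⟨hb z, hz⟩, if_pos hz, ih z hz]
      · rw [dif_neg (fun h => hz h.2), if_neg hz]

end Dow

namespace Dow

variable {n r : ℕ}

/-- The set of vectors described by a "normal form" `(σ, c)`: coordinate `i` is zero if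
`σ i = none`, and equals `c i * v j` if `σ i = some j` (where `j` is a block representative). -/
def Vs (σ : Fin n → Option (Fin n)) (c : Fin n → ℂ) : Set (Fin n → ℂ) :=
  {v | ∀ i, v i = (σ i).elim 0 (fun j => c i * v j)}

structure Valid (r : ℕ) (σ : Fin n → Option (Fin n)) (c : Fin n → ℂ) : Prop where
  rep : ∀ i j, σ i = some j → σ j = some j
  one : ∀ j, σ j = some j → c j = 1
  root : ∀ i j, σ i = some j → c i ^ r = 1

theorem mem_Vs {σ : Fin n → Option (Fin n)} {c : Fin n → ℂ} {v : Fin n → ℂ} :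
    v ∈ Vs σ c ↔ ∀ i, v i = (σ i).elim 0 (fun j => c i * v j) := Iff.rfl

theorem Vs_none_eq_zero {σ : Fin n → Option (Fin n)} {c : Fin n → ℂ} {v : Fin n → ℂ}
    (hv : v ∈ Vs σ c) {i : Fin n} (h : σ i = none) : v i = 0 := by
  have := hv i; rwa [h] at this

theorem Vs_some {σ : Fin n → Option (Fin n)} {c : Fin n → ℂ} {v : Fin n → ℂ}
    (hv : v ∈ Vs σ c) {i j : Fin n} (h : σ i = some j) : v i = c i * v j := by
  have := hv i; rwa [h] at this

/-- Killing the block with representative `t`. -/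
def kill (σ : Fin n → Option (Fin n)) (t : Fin n) : Fin n → Option (Fin n) :=
  fun i => if σ i = some t then none else σ i

theorem valid_kill {σ : Fin n → Option (Fin n)} {c : Fin n → ℂ} (h : Valid r σ c) (t : Fin n) :
    Valid r (kill σ t) c := by
  constructor
  · intro i j hij
    unfold kill at hij ⊢
    by_cases h1 : σ i = some t
    · rw [if_pos h1] at hij; exact absurd hij (by simp)
    · rw [if_neg h1] at hij
      have hj : σ j = some j := h.rep i j hij
      have : j ≠ t := fun he => h1 (he ▸ hij)
      rw [hj, if_neg (by simpa using this)]
  · intro j hj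
    unfold kill at hj
    by_cases h1 : σ j = some t
    · rw [if_pos h1] at hj; exact absurd hj (by simp)
    · rw [if_neg h1] at hj; exact h.one j hj
  · intro i j hij
    unfold kill at hij
    by_cases h1 : σ i = some t
    · rw [if_pos h1] at hij; exact absurd hij (by simp)
    · rw [if_neg h1] at hij; exact h.root i j hij

theorem Vs_kill {σ : Fin n → Option (Fin n)} {c : Fin n → ℂ} (h : Valid r σ c) {t : Fin n}
    (ht : σ t = some t) : Vs (kill σ t) c = Vs σ c ∩ {v | v t = 0} := by
  ext v
  constructor
  · intro hv
    have hvt : v t = 0 := Vs_none_eq_zero hv (by unfold kill; rw [if_pos ht])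
    refine ⟨?_, hvt⟩
    intro i
    by_cases h1 : σ i = some t
    · rw [h1]
      have h2 : v i = 0 := Vs_none_eq_zero hv (by unfold kill; rw [if_pos h1])
      simp only [Option.elim]
      rw [h2, hvt, mul_zero]
    · have := hv i; unfold kill at this; rwa [if_neg h1] at this
  · rintro ⟨hv, hvt⟩
    intro i
    unfold kill
    by_cases h1 : σ i = some t
    · rw [if_pos h1]
      have h2 := Vs_some hv h1
      have hvt' : v t = 0 := hvt
      simp only [Option.elim]
      rw [h2, hvt', mul_zero]
    · rw [if_neg h1]; exact hv i

/-- Merging block `s` into block `t` with ratio `γ` : on the new space, `v s = γ * v t`. -/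
def mσ (σ : Fin n → Option (Fin n)) (s t : Fin n) : Fin n → Option (Fin n) :=
  fun i => if σ i = some s then some t else σ i

def mc (σ : Fin n → Option (Fin n)) (c : Fin n → ℂ) (s : Fin n) (γ : ℂ) : Fin n → ℂ :=
  fun i => if σ i = some s then c i * γ else c i

theorem valid_merge {σ : Fin n → Option (Fin n)} {c : Fin n → ℂ} (h : Valid r σ c) {s t : Fin n}
    (hs : σ s = some s) (ht : σ t = some t) (hst : s ≠ t) {γ : ℂ} (hγ : γ ^ r = 1) :
    Valid r (mσ σ s t) (mc σ c s γ) := by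
  have hts : σ t ≠ some s := by rw [ht]; simpa using fun he => hst he.symm
  constructor
  · intro i j hij
    unfold mσ at hij ⊢
    by_cases h1 : σ i = some s
    · rw [if_pos h1] at hij
      obtain rfl : t = j := by injection hij
      rw [if_neg hts]
      exact ht
    · rw [if_neg h1] at hij
      have hjs : σ j ≠ some s := by
        rw [h.rep i j hij]
        intro he
        obtain rfl : j = s := by injection he
        exact h1 hij
      rw [if_neg hjs]
      exact h.rep i j hij
  · intro j hj
    unfold mσ at hj
    unfold mc
    by_cases h1 : σ j = some s
    · rw [if_pos h1] at hj
      obtain rfl : t = j := by injection hj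
      exact absurd h1 hts
    · rw [if_neg h1] at hj
      rw [if_neg h1]
      exact h.one j hj
  · intro i j hij
    unfold mσ at hij
    unfold mc
    by_cases h1 : σ i = some s
    · rw [if_pos h1, mul_pow, h.root i s h1, hγ, one_mul]
    · rw [if_neg h1]
      rw [if_neg h1] at hij
      exact h.root i j hij

theorem Vs_merge {σ : Fin n → Option (Fin n)} {c : Fin n → ℂ} (h : Valid r σ c) {s t : Fin n}
    (hs : σ s = some s) (ht : σ t = some t) (hst : s ≠ t) (γ : ℂ) :
    Vs (mσ σ s t) (mc σ c s γ) = Vs σ c ∩ {v | v s = γ * v t} := by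
  have hss : mσ σ s t s = some t := by simp [mσ, hs]
  have hcs : mc σ c s γ s = γ := by simp [mc, hs, h.one s hs]
  ext v
  constructor
  · intro hv
    have hvs : v s = γ * v t := by
      have h2 := hv s
      rw [hss] at h2
      simpa [hcs] using h2
    refine ⟨fun i => ?_, hvs⟩
    have h2 := hv i
    by_cases h1 : σ i = some s
    · rw [h1]
      rw [show mσ σ s t i = some t by simp [mσ, h1]] at h2
      simp only [Option.elim] at h2 ⊢
      rw [h2, hvs, show mc σ c s γ i = c i * γ from if_pos h1]
      ring
    · rw [show mσ σ s t i = σ i from if_neg h1] at h2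
      rcases h3 : σ i with _ | j
      · rw [h3] at h2; exact h2
      · rw [h3] at h2
        simp only [Option.elim] at h2 ⊢
        rw [h2, show mc σ c s γ i = c i from if_neg h1]
  · rintro ⟨hv, hvs⟩
    have hvs' : v s = γ * v t := hvs
    intro i
    by_cases h1 : σ i = some s
    · rw [show mσ σ s t i = some t by simp [mσ, h1]]
      simp only [Option.elim]
      rw [Vs_some hv h1, hvs', show mc σ c s γ i = c i * γ from if_pos h1]
      ring
    · rw [show mσ σ s t i = σ i from if_neg h1]
      rcases h3 : σ i with _ | j
      · have h2 := hv i
        rw [h3] at h2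
        exact h2
      · simp only [Option.elim]
        rw [show mc σ c s γ i = c i from if_neg h1]
        have h2 := hv i
        rw [h3] at h2
        exact h2

end Dow

namespace Dow

variable {n r : ℕ}

theorem ne_zero_of_pow_eq_one {x : ℂ} (hr : 0 < r) (hx : x ^ r = 1) : x ≠ 0 := by
  intro h0
  rw [h0, zero_pow hr.ne'] at hx
  exact zero_ne_one hx

theorem inter_congr {X : Type*} {A : Set X} {P Q : X → Prop}
    (h : ∀ v ∈ A, (P v ↔ Q v)) : A ∩ {v | P v} = A ∩ {v | Q v} := by
  ext v
  exact ⟨fun ⟨h1, h2⟩ => ⟨h1, (h v h1).1 h2⟩, fun ⟨h1, h2⟩ => ⟨h1, (h v h1).2 h2⟩⟩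

theorem step_eq (hr : 0 < r) {σ : Fin n → Option (Fin n)} {c : Fin n → ℂ} (h : Valid r σ c)
    (i j : Fin n) {ζ : ℂ} (hζ : ζ ^ r = 1) :
    ∃ σ' c', Valid r σ' c' ∧ Vs σ' c' = Vs σ c ∩ {v | v i = ζ * v j} := by
  have hζ0 : ζ ≠ 0 := ne_zero_of_pow_eq_one hr hζ
  rcases hi : σ i with _ | s
  · rcases hj : σ j with _ | t
    · -- both zero: no change
      refine ⟨σ, c, h, ?_⟩
      rw [Set.inter_eq_left.mpr ?_]
      intro v hv
      have h1 : v i = 0 := Vs_none_eq_zero hv hi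
      have h2 : v j = 0 := Vs_none_eq_zero hv hj
      simp only [Set.mem_setOf_eq]
      rw [h1, h2, mul_zero]
    · -- i zero, j in block t: kill t
      have ht : σ t = some t := h.rep j t hj
      have hcj : c j ≠ 0 := ne_zero_of_pow_eq_one hr (h.root j t hj)
      refine ⟨kill σ t, c, valid_kill h t, ?_⟩
      rw [Vs_kill h ht]
      apply inter_congr
      intro v hv
      rw [Vs_none_eq_zero hv hi, Vs_some hv hj]
      constructor
      · intro h2; rw [h2, mul_zero, mul_zero]
      · intro h2
        rcases mul_eq_zero.mp ((mul_eq_zero.mp h2.symm).resolve_left hζ0) with h3 | h3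
        · exact absurd h3 hcj
        · exact h3
  · rcases hj : σ j with _ | t
    · -- j zero, i in block s: kill s
      have hs : σ s = some s := h.rep i s hi
      have hci : c i ≠ 0 := ne_zero_of_pow_eq_one hr (h.root i s hi)
      refine ⟨kill σ s, c, valid_kill h s, ?_⟩
      rw [Vs_kill h hs]
      apply inter_congr
      intro v hv
      rw [Vs_none_eq_zero hv hj, Vs_some hv hi, mul_zero]
      constructor
      · intro h2; rw [h2, mul_zero]
      · intro h2; exact (mul_eq_zero.mp h2).resolve_left hci
    · -- i in block s, j in block t
      have hs : σ s = some s := h.rep i s hi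
      have ht : σ t = some t := h.rep j t hj
      have hci : c i ≠ 0 := ne_zero_of_pow_eq_one hr (h.root i s hi)
      rcases eq_or_ne s t with rfl | hst
      · rcases eq_or_ne (c i) (ζ * c j) with hc | hc
        · -- no new condition
          refine ⟨σ, c, h, ?_⟩
          rw [Set.inter_eq_left.mpr ?_]
          intro v hv
          simp only [Set.mem_setOf_eq]
          rw [Vs_some hv hi, Vs_some hv hj, hc, mul_assoc]
        · -- kill s
          refine ⟨kill σ s, c, valid_kill h s, ?_⟩
          rw [Vs_kill h hs]
          apply inter_congr
          intro v hv
          rw [Vs_some hv hi, Vs_some hv hj]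
          constructor
          · intro h2; rw [h2, mul_zero, mul_zero, mul_zero]
          · intro h2
            by_contra h3
            apply hc
            have := mul_right_cancel₀ h3 (h2.trans (mul_assoc ζ (c j) (v s)).symm)
            exact this
      · -- merge s into t
        set γ : ℂ := (c i)⁻¹ * (ζ * c j) with hγdef
        have hγ : γ ^ r = 1 := by
          rw [hγdef, mul_pow, mul_pow, inv_pow, h.root i s hi, hζ, h.root j t hj,
            inv_one, one_mul, one_mul]
        refine ⟨mσ σ s t, mc σ c s γ, valid_merge h hs ht hst hγ, ?_⟩
        rw [Vs_merge h hs ht hst γ]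
        apply inter_congr
        intro v hv
        rw [Vs_some hv hi, Vs_some hv hj]
        constructor
        · intro h2
          rw [h2, hγdef]
          field_simp
        · intro h2
          have : v s = (c i)⁻¹ * (ζ * (c j * v t)) := by
            rw [← h2, ← mul_assoc, inv_mul_cancel₀ hci, one_mul]
          rw [this, hγdef]
          ring
  
theorem step0_eq (hr : 0 < r) {σ : Fin n → Option (Fin n)} {c : Fin n → ℂ} (h : Valid r σ c)
    (k : Fin n) :
    ∃ σ' c', Valid r σ' c' ∧ Vs σ' c' = Vs σ c ∩ {v | v k = 0} := by
  rcases hk : σ k with _ | t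
  · refine ⟨σ, c, h, ?_⟩
    rw [Set.inter_eq_left.mpr ?_]
    intro v hv
    exact Vs_none_eq_zero hv hk
  · have ht : σ t = some t := h.rep k t hk
    have hck : c k ≠ 0 := ne_zero_of_pow_eq_one hr (h.root k t hk)
    refine ⟨kill σ t, c, valid_kill h t, ?_⟩
    rw [Vs_kill h ht]
    apply inter_congr
    intro v hv
    rw [Vs_some hv hk]
    constructor
    · intro h2; rw [h2, mul_zero]
    · intro h2; exact (mul_eq_zero.mp h2).resolve_left hck

end Dow

namespace Dow

variable {n r : ℕ}

theorem coe_ker_pair (i j : Fin n) (ζ : ℂ) :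
    ((LinearMap.ker (LinearMap.proj (R := ℂ) (φ := fun _ : Fin n => ℂ) i -
        ζ • LinearMap.proj j) : Submodule ℂ (Fin n → ℂ)) : Set (Fin n → ℂ))
      = {v | v i = ζ * v j} := by
  ext v
  simp [LinearMap.mem_ker, LinearMap.sub_apply, LinearMap.smul_apply, LinearMap.proj_apply,
    sub_eq_zero, smul_eq_mul]

theorem coe_ker_single (k : Fin n) :
    ((LinearMap.ker (LinearMap.proj (R := ℂ) (φ := fun _ : Fin n => ℂ) k) :
        Submodule ℂ (Fin n → ℂ)) : Set (Fin n → ℂ)) = {v | v k = 0} := by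
  ext v
  simp [LinearMap.mem_ker, LinearMap.proj_apply]

open Classical in
theorem normal_form (hr : 0 < r) (S : Finset (Submodule ℂ (Fin n → ℂ)))
    (hS : ↑S ⊆ arrA n r) :
    ∃ σ c, Valid r σ c ∧
      ((sInf (S : Set (Submodule ℂ (Fin n → ℂ))) : Submodule ℂ (Fin n → ℂ)) :
        Set (Fin n → ℂ)) = Vs σ c := by
  induction S using Finset.induction_on with
  | empty =>
    refine ⟨fun i => some i, fun _ => 1, ⟨fun i j h => by simpa using h ▸ rfl,
      fun _ _ => rfl, fun i j h => one_pow r⟩, ?_⟩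
    simp only [Finset.coe_empty, sInf_empty, Submodule.top_coe]
    ext v
    simp only [Set.mem_univ, true_iff, mem_Vs]
    intro i
    simp [Option.elim]
  | @insert H S hH ih =>
    have hS' : ↑S ⊆ arrA n r := by
      intro W hW
      exact hS (by simp [hW])
    obtain ⟨σ, c, hv, hVs⟩ := ih hS'
    have hHa : H ∈ arrA n r := hS (by simp)
    have hins : ((insert H S : Finset (Submodule ℂ (Fin n → ℂ))) :
        Set (Submodule ℂ (Fin n → ℂ))) = insert H (↑S) := by simp
    have hsinf : sInf ((insert H S : Finset (Submodule ℂ (Fin n → ℂ))) :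
        Set (Submodule ℂ (Fin n → ℂ))) = H ⊓ sInf (↑S : Set (Submodule ℂ (Fin n → ℂ))) := by
      rw [hins, sInf_insert]
    rcases hHa with ⟨i, j, ζ, hij, hζ, rfl⟩ | ⟨k, rfl⟩
    · obtain ⟨σ', c', hv', hVs'⟩ := step_eq hr hv i j hζ
      refine ⟨σ', c', hv', ?_⟩
      rw [hsinf, Submodule.coe_inf, coe_ker_pair, hVs, Set.inter_comm, hVs']
    · obtain ⟨σ', c', hv', hVs'⟩ := step0_eq hr hv k
      refine ⟨σ', c', hv', ?_⟩
      rw [hsinf, Submodule.coe_inf, coe_ker_single, hVs, Set.inter_comm, hVs']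

end Dow

namespace Dow

variable {n r : ℕ}

/-- The number of free blocks of a normal form. -/
noncomputable def kN (σ : Fin n → Option (Fin n)) : ℕ :=
  Nat.card {j : Fin n // σ j = some j}

/-- Extension of a choice of values on representatives to a vector in `Vs σ c`. -/
noncomputable def extV (σ : Fin n → Option (Fin n)) (c : Fin n → ℂ) (h : Valid r σ c)
    (w : {j : Fin n // σ j = some j} → ℂ) : Fin n → ℂ := fun i =>
  if hi : (σ i).isSome then
    c i * w ⟨(σ i).get hi, h.rep i _ (Option.some_get hi).symm⟩ else 0

theorem extV_some {σ : Fin n → Option (Fin n)} {c : Fin n → ℂ} (h : Valid r σ c)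
    (w : {j : Fin n // σ j = some j} → ℂ) {i j : Fin n} (hij : σ i = some j) :
    extV σ c h w i = c i * w ⟨j, h.rep i j hij⟩ := by
  simp [extV, hij]

theorem extV_none {σ : Fin n → Option (Fin n)} {c : Fin n → ℂ} (h : Valid r σ c)
    (w : {j : Fin n // σ j = some j} → ℂ) {i : Fin n} (hi : σ i = none) :
    extV σ c h w i = 0 := by
  simp [extV, hi]

theorem extV_mem_Vs {σ : Fin n → Option (Fin n)} {c : Fin n → ℂ} (h : Valid r σ c)
    (w : {j : Fin n // σ j = some j} → ℂ) : extV σ c h w ∈ Vs σ c := by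
  intro i
  rcases hij : σ i with _ | j
  · rw [extV_none h w hij]
    rfl
  · rw [extV_some h w hij]
    simp only [Option.elim]
    have hj : σ j = some j := h.rep i j hij
    rw [extV_some h w hj, h.one j hj, one_mul]

open Classical in
theorem card_Vs_inter {σ : Fin n → Option (Fin n)} {c : Fin n → ℂ} (h : Valid r σ c)
    (P : Set ℂ) (h0 : (0 : ℂ) ∈ P)
    (hcl : ∀ ζ z : ℂ, ζ ^ r = 1 → z ∈ P → ζ * z ∈ P) :
    Nat.card {v : Fin n → ℂ // v ∈ Vs σ c ∧ ∀ i, v i ∈ P} = (Nat.card P) ^ kN σ := by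
  have hbij : Function.Bijective
      (fun (v : {v : Fin n → ℂ // v ∈ Vs σ c ∧ ∀ i, v i ∈ P})
        (j : {j : Fin n // σ j = some j}) => (⟨v.1 j.1, v.2.2 j.1⟩ : {z : ℂ // z ∈ P})) := by
    constructor
    · intro v v' hvv
      ext i
      rcases hij : σ i with _ | j
      · rw [Vs_none_eq_zero v.2.1 hij, Vs_none_eq_zero v'.2.1 hij]
      · have hj : σ j = some j := h.rep i j hij
        have := congrFun hvv ⟨j, hj⟩
        have hvj : v.1 j = v'.1 j := congrArg Subtype.val this
        rw [Vs_some v.2.1 hij, Vs_some v'.2.1 hij, hvj]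
    · intro w
      refine ⟨⟨extV σ c h (fun j => (w j).1), extV_mem_Vs h _, ?_⟩, ?_⟩
      · intro i
        rcases hij : σ i with _ | j
        · rw [extV_none h _ hij]; exact h0
        · rw [extV_some h _ hij]
          exact hcl _ _ (h.root i j hij) (w ⟨j, h.rep i j hij⟩).2
      · funext j
        apply Subtype.ext
        show extV σ c h (fun j => (w j).1) j.1 = (w j).1
        rw [extV_some h _ j.2, h.one j.1 j.2, one_mul]
  rw [Nat.card_congr (Equiv.ofBijective _ hbij), Nat.card_fun]
  rfl

/-- If the normal form has no free blocks, the space is zero, and conversely. -/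
theorem Vs_eq_zero_iff {σ : Fin n → Option (Fin n)} {c : Fin n → ℂ} (h : Valid r σ c) :
    Vs σ c = {0} ↔ kN σ = 0 := by
  constructor
  · intro hz
    rw [kN, Nat.card_eq_zero]
    left
    constructor
    rintro ⟨j, hj⟩
    -- construct a nonzero element of Vs σ c
    set v : Fin n → ℂ := fun i => (σ i).elim 0 (fun t => if t = j then c i else 0) with hv
    have hvm : v ∈ Vs σ c := by
      intro i
      rcases hit : σ i with _ | t
      · simp [hv, hit]
      · simp only [hv, hit, Option.elim]
        have htt : σ t = some t := h.rep i t hit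
        rw [htt]
        simp only [Option.elim]
        by_cases hta : t = j
        · rw [if_pos hta, if_pos hta, h.one t htt, mul_one]
        · rw [if_neg hta, if_neg hta, mul_zero]
    have : v = 0 := by
      have := hz ▸ hvm
      simpa using this
    have hvj : v j = 1 := by
      simp only [hv, hj, Option.elim]
      simp [h.one j hj]
    rw [this] at hvj
    simp at hvj
  · intro hk
    have hnone : ∀ i, σ i = none := by
      intro i
      rcases hij : σ i with _ | j
      · rfl
      · exfalso
        rw [kN, Nat.card_eq_zero] at hk
        rcases hk with hk | hk
        · exact hk.false ⟨j, h.rep i j hij⟩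
        · exact (not_finite_iff_infinite.mpr hk) inferInstance
    ext v
    constructor
    · intro hv
      have : ∀ i, v i = 0 := fun i => Vs_none_eq_zero hv (hnone i)
      simpa using (funext this : v = 0)
    · rintro rfl
      intro i
      rw [hnone i]
      rfl

end Dow

namespace Dow

variable {n r : ℕ}

theorem pow_one_ne_zero {x : ℂ} {N : ℕ} (hN : 0 < N) (hx : x ^ N = 1) : x ≠ 0 := by
  intro h0
  rw [h0, zero_pow hN.ne'] at hx
  exact zero_ne_one hx

/-- The point set: `0` together with all `N`-th roots of unity. -/
noncomputable def PF (N : ℕ) : Finset ℂ := insert 0 (Polynomial.nthRootsFinset N (1 : ℂ))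

theorem mem_PF {N : ℕ} (hN : 0 < N) {z : ℂ} : z ∈ PF N ↔ z = 0 ∨ z ^ N = 1 := by
  rw [PF, Finset.mem_insert, Polynomial.mem_nthRootsFinset hN]

theorem card_PF {N : ℕ} (hN : 0 < N) : (PF N).card = N + 1 := by
  rw [PF, Finset.card_insert_of_notMem, (Complex.isPrimitiveRoot_exp N hN.ne').card_nthRootsFinset]
  rw [Polynomial.mem_nthRootsFinset hN, zero_pow hN.ne']
  exact fun h => zero_ne_one h

theorem card_good (m : ℕ) (hm : 0 < m) (hr : 0 < r) :
    Nat.card {v : Fin n → ℂ // (∀ i, v i ∈ PF (m * r)) ∧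
      (∀ k, v k ≠ 0) ∧ ∀ i j : Fin n, i < j → ∀ ζ : ℂ, ζ ^ r = 1 → v i ≠ ζ * v j}
      = m.descFactorial n * r ^ n := by
  classical
  have hmr : 0 < m * r := Nat.mul_pos hm hr
  haveI : NeZero (m * r) := ⟨hmr.ne'⟩
  haveI : NeZero m := ⟨hm.ne'⟩
  set ω : ℂ := Complex.exp (2 * Real.pi * Complex.I / (↑(m * r) : ℂ)) with hωdef
  have hω : IsPrimitiveRoot ω (m * r) := Complex.isPrimitiveRoot_exp (m * r) hmr.ne'
  have hω1 : ω ^ (m * r) = 1 := hω.pow_eq_one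
  have hmod : ∀ x : ℕ, ω ^ x = ω ^ (x % (m * r)) := by
    intro x
    conv_lhs => rw [← Nat.div_add_mod x (m * r)]
    rw [pow_add, pow_mul, hω1, one_pow, one_mul]
  have hpoweq : ∀ x y : ℕ, (ω ^ x = ω ^ y) ↔ x % (m * r) = y % (m * r) := by
    intro x y
    constructor
    · intro h
      exact hω.pow_inj (Nat.mod_lt x hmr) (Nat.mod_lt y hmr)
        (by rw [← hmod, ← hmod]; exact h)
    · intro h
      rw [hmod x, hmod y, h]
  let cm : ZMod (m * r) →+* ZMod m := ZMod.castHom (dvd_mul_right m r) (ZMod m)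
  have cmval : ∀ y : ZMod (m * r), cm y = ((y.val : ℕ) : ZMod m) := by
    intro y
    conv_lhs => rw [← ZMod.natCast_rightInverse y]
    rw [map_natCast]
  have key : ∀ a b : ZMod (m * r), ((ω ^ a.val) ^ r = (ω ^ b.val) ^ r) ↔ cm a = cm b := by
    intro a b
    rw [← pow_mul, ← pow_mul, hpoweq, cmval, cmval, ZMod.natCast_eq_natCast_iff]
    exact (Nat.ModEq.mul_right_cancel_iff' hr.ne')
  have hωne : ∀ x : ℕ, ω ^ x ≠ 0 := fun x => pow_ne_zero _ (pow_one_ne_zero hmr hω1)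
  -- the parametrization of good vectors by ZMod vectors injective mod m
  let Ψ : (Fin n → ZMod (m * r)) → (Fin n → ℂ) := fun a i => ω ^ (a i).val
  have hmemΨ : ∀ (a : Fin n → ZMod (m * r)) (i : Fin n), Ψ a i ∈ PF (m * r) := by
    intro a i
    rw [mem_PF hmr]
    right
    rw [← pow_mul, mul_comm ((a i).val), pow_mul, hω1, one_pow]
  have hcond : ∀ a : Fin n → ZMod (m * r), Function.Injective (fun i => cm (a i)) ↔
      ((∀ k, Ψ a k ≠ 0) ∧ ∀ i j : Fin n, i < j → ∀ ζ : ℂ, ζ ^ r = 1 → Ψ a i ≠ ζ * Ψ a j) := by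
    intro a
    constructor
    · intro hinj
      refine ⟨fun k => hωne _, ?_⟩
      intro i j hij ζ hζ heq
      have h2 : (Ψ a i) ^ r = (Ψ a j) ^ r := by
        rw [heq, mul_pow, hζ, one_mul]
      have := (key (a i) (a j)).mp h2
      exact absurd (hinj this) hij.ne
    · rintro ⟨hnz, hpair⟩
      intro i j hcij
      by_contra hij
      have h2 : (Ψ a i) ^ r = (Ψ a j) ^ r := (key (a i) (a j)).mpr hcij
      rcases lt_or_gt_of_ne hij with hlt | hlt
      · refine hpair i j hlt (Ψ a i / Ψ a j) ?_ ?_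
        · rw [div_pow, h2, div_self (pow_ne_zero _ (hωne _))]
        · rw [div_mul_cancel₀ _ (hωne _)]
      · refine hpair j i hlt (Ψ a j / Ψ a i) ?_ ?_
        · rw [div_pow, h2, div_self (pow_ne_zero _ (hωne _))]
        · rw [div_mul_cancel₀ _ (hωne _)]
  have e1 : Nat.card {v : Fin n → ℂ // (∀ i, v i ∈ PF (m * r)) ∧
      (∀ k, v k ≠ 0) ∧ ∀ i j : Fin n, i < j → ∀ ζ : ℂ, ζ ^ r = 1 → v i ≠ ζ * v j}
      = Nat.card {a : Fin n → ZMod (m * r) // Function.Injective (fun i => cm (a i))} := by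
    apply Nat.card_congr
    apply Equiv.symm
    apply Equiv.ofBijective (f := fun a => ⟨Ψ a.1, fun i => hmemΨ a.1 i, (hcond a.1).mp a.2⟩)
    constructor
    · intro a b hab
      apply Subtype.ext
      funext i
      have h2 : Ψ a.1 i = Ψ b.1 i := congrFun (congrArg Subtype.val hab) i
      have h3 : (a.1 i).val % (m * r) = (b.1 i).val % (m * r) := (hpoweq _ _).mp h2
      rw [Nat.mod_eq_of_lt (ZMod.val_lt _), Nat.mod_eq_of_lt (ZMod.val_lt _)] at h3
      exact ZMod.val_injective _ h3
    · rintro ⟨v, hmem, hcnd⟩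
      have hroot : ∀ i, (v i) ^ (m * r) = 1 := by
        intro i
        rcases (mem_PF hmr).mp (hmem i) with h0 | h1
        · exact absurd h0 (hcnd.1 i)
        · exact h1
      choose g hg hgv using fun i => hω.eq_pow_of_pow_eq_one (hroot i)
      refine ⟨⟨fun i => (g i : ZMod (m * r)), ?_⟩, ?_⟩
      · have hΨv : Ψ (fun i => (g i : ZMod (m * r))) = v := by
          funext i
          show ω ^ (((g i : ℕ) : ZMod (m * r))).val = v i
          rw [ZMod.val_natCast, ← hmod, hgv i]
        rw [hcond]
        rw [hΨv]
        exact hcnd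
      · apply Subtype.ext
        funext i
        show ω ^ (((g i : ℕ) : ZMod (m * r))).val = v i
        rw [ZMod.val_natCast, ← hmod, hgv i]
  rw [e1]
  -- now count ZMod vectors injective mod m
  let s : ZMod m → ZMod (m * r) := fun x => ((x.val : ℕ) : ZMod (m * r))
  have hcms : ∀ x : ZMod m, cm (s x) = x := by
    intro x
    show cm ((x.val : ℕ) : ZMod (m * r)) = x
    rw [map_natCast]
    exact ZMod.natCast_rightInverse x
  let K := {y : ZMod (m * r) // cm y = 0}
  let E2 : {a : Fin n → ZMod (m * r) // Function.Injective (fun i => cm (a i))} ≃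
      ((Fin n ↪ ZMod m) × (Fin n → K)) :=
    { toFun := fun a => (⟨fun i => cm (a.1 i), a.2⟩,
        fun i => ⟨a.1 i - s (cm (a.1 i)), by rw [map_sub, hcms, sub_self]⟩)
      invFun := fun p => ⟨fun i => s (p.1 i) + (p.2 i).1, by
        intro i j hij
        simp only [map_add, hcms] at hij
        rw [(p.2 i).2, (p.2 j).2, add_zero, add_zero] at hij
        exact p.1.injective hij⟩
      left_inv := fun a => by
        apply Subtype.ext
        funext i
        show s (cm (a.1 i)) + (a.1 i - s (cm (a.1 i))) = a.1 i
        ring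
      right_inv := fun p => by
        have h1 : ∀ i, cm (s (p.1 i) + (p.2 i).1) = p.1 i := by
          intro i
          rw [map_add, hcms, (p.2 i).2, add_zero]
        refine Prod.ext ?_ ?_
        · apply Function.Embedding.ext
          intro i
          exact h1 i
        · funext i
          apply Subtype.ext
          show s (p.1 i) + (p.2 i).1 - s (cm (s (p.1 i) + (p.2 i).1)) = (p.2 i).1
          rw [h1 i, add_sub_cancel_left] }
  rw [Nat.card_congr E2, Nat.card_prod, Nat.card_fun]
  -- card of K is r
  have hK : Nat.card K = r := by
    have hb : Function.Bijective (fun t : Fin r => (⟨((m * (t : ℕ) : ℕ) : ZMod (m * r)), by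
        rw [map_natCast, ZMod.natCast_eq_zero_iff]
        exact dvd_mul_right m _⟩ : K)) := by
      constructor
      · intro t1 t2 ht
        have h2 : ((m * (t1 : ℕ) : ℕ) : ZMod (m * r)) = ((m * (t2 : ℕ) : ℕ) : ZMod (m * r)) :=
          congrArg Subtype.val ht
        have h3 := congrArg ZMod.val h2
        have hlt : ∀ t : Fin r, m * (t : ℕ) < m * r := by
          intro t
          exact Nat.mul_lt_mul_of_le_of_lt (le_refl m) t.2 hm
        rw [ZMod.val_natCast, ZMod.val_natCast,
          Nat.mod_eq_of_lt (hlt t1), Nat.mod_eq_of_lt (hlt t2)] at h3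
        exact Fin.ext (Nat.eq_of_mul_eq_mul_left hm h3)
      · rintro ⟨y, hy⟩
        rw [cmval, ZMod.natCast_eq_zero_iff] at hy
        obtain ⟨t, ht⟩ := hy
        have htr : t < r := by
          have := ZMod.val_lt y
          rw [ht] at this
          exact lt_of_mul_lt_mul_left this (Nat.zero_le m)
        refine ⟨⟨t, htr⟩, Subtype.ext ?_⟩
        show ((m * t : ℕ) : ZMod (m * r)) = y
        rw [← ht]
        exact ZMod.natCast_rightInverse y
    rw [Nat.card_congr (Equiv.ofBijective _ hb).symm, Nat.card_eq_fintype_card,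
      Fintype.card_fin]
  rw [hK, Nat.card_eq_fintype_card, Fintype.card_embedding_eq, ZMod.card, Fintype.card_fin,
    Nat.card_eq_fintype_card, Fintype.card_fin]

end Dow

namespace Dow

variable {n r : ℕ}

theorem arrA_finite (n r : ℕ) (hr : 0 < r) : (arrA n r).Finite := by
  classical
  have h1 : arrA n r ⊆
      (Set.range (fun p : Fin n × Fin n × {z : ℂ // z ∈ Polynomial.nthRootsFinset r (1 : ℂ)} =>
        LinearMap.ker (LinearMap.proj (R := ℂ) (φ := fun _ : Fin n => ℂ) p.1 -
          (p.2.2 : ℂ) • LinearMap.proj p.2.1))) ∪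
      (Set.range (fun k : Fin n =>
        LinearMap.ker (LinearMap.proj (R := ℂ) (φ := fun _ : Fin n => ℂ) k))) := by
    rintro W (⟨i, j, ζ, hij, hζ, rfl⟩ | ⟨k, rfl⟩)
    · left
      exact ⟨(i, j, ⟨ζ, (Polynomial.mem_nthRootsFinset hr (1 : ℂ)).mpr hζ⟩), rfl⟩
    · right
      exact ⟨k, rfl⟩
  exact ((Set.finite_range _).union (Set.finite_range _)).subset h1

theorem top_not_mem_arrA (hr : 0 < r) : (⊤ : Submodule ℂ (Fin n → ℂ)) ∉ arrA n r := by
  rintro (⟨i, j, ζ, hij, hζ, htop⟩ | ⟨k, htop⟩)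
  · have hmem : Pi.single i 1 ∈ LinearMap.ker (LinearMap.proj (R := ℂ) (φ := fun _ : Fin n => ℂ) i -
        ζ • LinearMap.proj j) := by
      rw [← htop]; trivial
    rw [LinearMap.mem_ker, LinearMap.sub_apply, LinearMap.smul_apply, LinearMap.proj_apply,
      LinearMap.proj_apply] at hmem
    rw [Pi.single_eq_same, Pi.single_eq_of_ne hij.ne' 1] at hmem
    simp at hmem
  · have hmem : Pi.single k 1 ∈
        LinearMap.ker (LinearMap.proj (R := ℂ) (φ := fun _ : Fin n => ℂ) k) := by
      rw [← htop]; trivial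
    rw [LinearMap.mem_ker, LinearMap.proj_apply, Pi.single_eq_same] at hmem
    exact one_ne_zero hmem

theorem sInf_arrA_eq_bot (n r : ℕ) : sInf (arrA n r) = ⊥ := by
  rw [eq_bot_iff]
  intro v hv
  have : ∀ k : Fin n, v k = 0 := by
    intro k
    have hk := (Submodule.mem_sInf.mp hv) _ (Or.inr ⟨k, rfl⟩)
    rwa [LinearMap.mem_ker, LinearMap.proj_apply] at hk
  have : v = 0 := funext fun i => this i
  rw [this]
  exact Submodule.zero_mem ⊥

theorem avoid_iff (hr : 0 < r) (v : Fin n → ℂ) :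
    (∀ H ∈ arrA n r, v ∉ H) ↔
      ((∀ k, v k ≠ 0) ∧ ∀ i j : Fin n, i < j → ∀ ζ : ℂ, ζ ^ r = 1 → v i ≠ ζ * v j) := by
  constructor
  · intro h
    constructor
    · intro k hk
      apply h _ (Or.inr ⟨k, rfl⟩)
      rw [LinearMap.mem_ker, LinearMap.proj_apply]
      exact hk
    · intro i j hij ζ hζ heq
      apply h _ (Or.inl ⟨i, j, ζ, hij, hζ, rfl⟩)
      rw [LinearMap.mem_ker, LinearMap.sub_apply, LinearMap.smul_apply, LinearMap.proj_apply,
        LinearMap.proj_apply, smul_eq_mul, heq, sub_self]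
  · rintro ⟨h1, h2⟩ H hH hmem
    rcases hH with ⟨i, j, ζ, hij, hζ, rfl⟩ | ⟨k, rfl⟩
    · rw [LinearMap.mem_ker, LinearMap.sub_apply, LinearMap.smul_apply, LinearMap.proj_apply,
        LinearMap.proj_apply, smul_eq_mul, sub_eq_zero] at hmem
      exact h2 i j hij ζ hζ hmem
    · rw [LinearMap.mem_ker, LinearMap.proj_apply] at hmem
      exact h1 k hmem

theorem submodule_eq_bot_iff (W : Submodule ℂ (Fin n → ℂ)) :
    W = ⊥ ↔ (W : Set (Fin n → ℂ)) = {0} := by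
  rw [SetLike.ext'_iff, Submodule.bot_coe]

end Dow

namespace Dow

variable {n r : ℕ}

set_option maxHeartbeats 1000000 in
open Classical in
theorem ie_sum (hr : 0 < r) (AF : Finset (Submodule ℂ (Fin n → ℂ)))
    (hAF : (AF : Set (Submodule ℂ (Fin n → ℂ))) = arrA n r)
    (m : ℕ) (hm : 0 < m) (f : Finset (Submodule ℂ (Fin n → ℂ)) → ℕ)
    (hf : ∀ S ∈ AF.powerset, Nat.card {v : Fin n → ℂ //
        v ∈ (sInf (↑S : Set (Submodule ℂ (Fin n → ℂ))) : Submodule ℂ (Fin n → ℂ)) ∧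
        ∀ i, v i ∈ PF (m * r)} = (m * r + 1) ^ f S) :
    ∑ S ∈ AF.powerset, (-1 : ℤ) ^ S.card * (m * r + 1 : ℤ) ^ f S
      = (m.descFactorial n : ℤ) * (r : ℤ) ^ n := by
  haveI instΩ : Fintype {v : Fin n → ℂ // ∀ i, v i ∈ PF (m * r)} :=
    Fintype.ofEquiv (∀ _ : Fin n, {z : ℂ // z ∈ PF (m * r)})
      (Equiv.subtypePiEquivPi (p := fun _ (z : ℂ) => z ∈ PF (m * r))).symm
  have hcardsum : ∀ A : (Fin n → ℂ) → Prop,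
      (Nat.card {v : Fin n → ℂ // A v ∧ ∀ i, v i ∈ PF (m * r)} : ℤ)
        = ∑ w : {v : Fin n → ℂ // ∀ i, v i ∈ PF (m * r)}, (if A w.1 then (1 : ℤ) else 0) := by
    intro A
    have e : {v : Fin n → ℂ // A v ∧ ∀ i, v i ∈ PF (m * r)} ≃
        {w : {v : Fin n → ℂ // ∀ i, v i ∈ PF (m * r)} // A w.1} :=
      ((Equiv.subtypeSubtypeEquivSubtypeInter _ _).trans
        (Equiv.subtypeEquivRight (fun v => and_comm))).symm
    rw [Nat.card_congr e, Nat.card_eq_fintype_card, Fintype.card_subtype, Finset.card_filter]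
    push_cast
    apply Finset.sum_congr rfl
    intro w _
    split <;> rfl
  have hterm : ∀ S ∈ AF.powerset, (m * r + 1 : ℤ) ^ f S
      = ∑ w : {v : Fin n → ℂ // ∀ i, v i ∈ PF (m * r)},
          (if w.1 ∈ (sInf (↑S : Set (Submodule ℂ (Fin n → ℂ))) : Submodule ℂ (Fin n → ℂ))
            then (1 : ℤ) else 0) := by
    intro S hS
    rw [← hcardsum]
    rw [hf S hS]
    push_cast
    rfl
  calc ∑ S ∈ AF.powerset, (-1 : ℤ) ^ S.card * (m * r + 1 : ℤ) ^ f S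
      = ∑ S ∈ AF.powerset, ∑ w : {v : Fin n → ℂ // ∀ i, v i ∈ PF (m * r)},
          (-1 : ℤ) ^ S.card *
          (if w.1 ∈ (sInf (↑S : Set (Submodule ℂ (Fin n → ℂ))) : Submodule ℂ (Fin n → ℂ))
            then (1 : ℤ) else 0) := by
        apply Finset.sum_congr rfl
        intro S hS
        rw [hterm S hS, Finset.mul_sum]
    _ = ∑ w : {v : Fin n → ℂ // ∀ i, v i ∈ PF (m * r)}, ∑ S ∈ AF.powerset,
          (-1 : ℤ) ^ S.card *
          (if w.1 ∈ (sInf (↑S : Set (Submodule ℂ (Fin n → ℂ))) : Submodule ℂ (Fin n → ℂ))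
            then (1 : ℤ) else 0) := Finset.sum_comm
    _ = ∑ w : {v : Fin n → ℂ // ∀ i, v i ∈ PF (m * r)},
          (if ∀ H ∈ AF, w.1 ∉ H then (1 : ℤ) else 0) := by
        apply Finset.sum_congr rfl
        intro w _
        set T := AF.filter (fun H => w.1 ∈ H) with hT
        have hmem : ∀ S ∈ AF.powerset,
            (w.1 ∈ (sInf (↑S : Set (Submodule ℂ (Fin n → ℂ))) : Submodule ℂ (Fin n → ℂ)))
              ↔ S ⊆ T := by
          intro S hS
          rw [Submodule.mem_sInf]
          constructor
          · intro h H hH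
            rw [hT, Finset.mem_filter]
            exact ⟨Finset.mem_powerset.mp hS hH, h H (by exact_mod_cast hH)⟩
          · intro h p hp
            have hp' : p ∈ S := by exact_mod_cast hp
            exact (Finset.mem_filter.mp (h hp')).2
        have h1 : ∑ S ∈ AF.powerset, (-1 : ℤ) ^ S.card *
            (if w.1 ∈ (sInf (↑S : Set (Submodule ℂ (Fin n → ℂ))) : Submodule ℂ (Fin n → ℂ))
              then (1 : ℤ) else 0)
            = ∑ S ∈ AF.powerset, (if S ⊆ T then (-1 : ℤ) ^ S.card else 0) := by
          apply Finset.sum_congr rfl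
          intro S hS
          by_cases hc : S ⊆ T
          · rw [if_pos hc, if_pos ((hmem S hS).mpr hc), mul_one]
          · rw [if_neg hc, if_neg (fun hx => hc ((hmem S hS).mp hx)), mul_zero]
        rw [h1, Finset.sum_ite, Finset.sum_const_zero, add_zero]
        have h2 : AF.powerset.filter (· ⊆ T) = T.powerset := by
          ext S
          simp only [Finset.mem_filter, Finset.mem_powerset]
          constructor
          · exact fun h => h.2
          · intro h
            exact ⟨h.trans (Finset.filter_subset _ _), h⟩
        rw [h2, Finset.sum_powerset_neg_one_pow_card]
        have h3 : (T = ∅) ↔ (∀ H ∈ AF, w.1 ∉ H) := by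
          rw [hT, Finset.filter_eq_empty_iff]
        exact if_congr h3 rfl rfl
    _ = (Nat.card {v : Fin n → ℂ // (∀ H ∈ AF, v ∉ H) ∧ ∀ i, v i ∈ PF (m * r)} : ℤ) := by
        rw [hcardsum (fun v => ∀ H ∈ AF, v ∉ H)]
        apply Finset.sum_congr rfl
        intro w _
        by_cases h : ∀ H ∈ AF, (w.1 : Fin n → ℂ) ∉ H
        · rw [if_pos h, if_pos h]
        · rw [if_neg h, if_neg h]
    _ = (m.descFactorial n : ℤ) * (r : ℤ) ^ n := by
        have hiff : ∀ v : Fin n → ℂ,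
            ((∀ H ∈ AF, v ∉ H) ∧ ∀ i, v i ∈ PF (m * r)) ↔
            ((∀ i, v i ∈ PF (m * r)) ∧
              (∀ k, v k ≠ 0) ∧ ∀ i j : Fin n, i < j → ∀ ζ : ℂ, ζ ^ r = 1 → v i ≠ ζ * v j) := by
          intro v
          have havoid : (∀ H ∈ AF, v ∉ H) ↔ (∀ H ∈ arrA n r, v ∉ H) := by
            rw [← hAF]
            exact ⟨fun h H hH => h H (by exact_mod_cast hH), fun h H hH => h H (by exact_mod_cast hH)⟩
          rw [havoid, avoid_iff hr v, and_comm]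
        rw [Nat.card_congr (Equiv.subtypeEquivRight hiff), card_good m hm hr]
        push_cast
        ring

end Dow


namespace Dow

theorem zero_pow_ite (k : ℕ) : (0 : ℤ) ^ k = if k = 0 then 1 else 0 := by
  rcases Nat.eq_zero_or_pos k with rfl | hk
  · simp
  · rw [zero_pow hk.ne', if_neg hk.ne']

end Dow

set_option maxHeartbeats 1600000

/-- The Möbius function `μ(0̂, 1̂)` of the Dowling lattice
`Q_n(r) ≅ L(A_n(r))` — the intersection lattice of the arrangement `A_n(r)`, ordered by
reverse inclusion, with `0̂ = ℂ^n` and `1̂` the intersection of all the hyperplanes — equals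
`(-1)^n (r+1)(2r+1)⋯((n-1)r+1)`. -/
theorem mobius_dowling (n r : ℕ) (hr : 0 < r) [Finite ↥(interLat (arrA n r))] :
    mob (OrderDual.toDual
          (⟨(⊤ : Submodule ℂ (Fin n → ℂ)), ∅, Set.empty_subset _, sInf_empty.symm⟩ :
            ↥(interLat (arrA n r))))
        (OrderDual.toDual ⟨sInf (arrA n r), arrA n r, subset_rfl, rfl⟩) =
      (-1 : ℤ) ^ n * ∏ i ∈ Finset.range n, ((i * r + 1 : ℕ) : ℤ) := by
  classical
  have hfin := Dow.arrA_finite n r hr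
  set L := (↥(interLat (arrA n r)))ᵒᵈ with hL
  set bot : L := OrderDual.toDual
      (⟨(⊤ : Submodule ℂ (Fin n → ℂ)), ∅, Set.empty_subset _, sInf_empty.symm⟩ :
        ↥(interLat (arrA n r))) with hbot
  set AF : Finset (Submodule ℂ (Fin n → ℂ)) := hfin.toFinset with hAFdef
  have hAF : (AF : Set (Submodule ℂ (Fin n → ℂ))) = arrA n r := hfin.coe_toFinset
  -- choose normal forms
  choose! σf cf hval hVs using
    fun (S : Finset (Submodule ℂ (Fin n → ℂ))) (hS : ↑S ⊆ arrA n r) => Dow.normal_form hr S hS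
  set kf : Finset (Submodule ℂ (Fin n → ℂ)) → ℕ := fun S => Dow.kN (σf S) with hkf
  have hsub : ∀ S ∈ AF.powerset, (↑S : Set (Submodule ℂ (Fin n → ℂ))) ⊆ arrA n r := by
    intro S hS
    rw [← hAF]
    exact fun W hW => Finset.mem_coe.mpr (Finset.mem_powerset.mp hS (Finset.mem_coe.mp hW))
  -- the underlying submodule of an element of L
  set valL : L → Submodule ℂ (Fin n → ℂ) := fun y => (OrderDual.ofDual y).1 with hvalL
  have hvalinj : Function.Injective valL := by
    intro a b hab
    exact OrderDual.ofDual.injective (Subtype.ext hab)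
  -- the lattice element attached to a subset of hyperplanes
  set elf : Finset (Submodule ℂ (Fin n → ℂ)) → L := fun S =>
    if hS : (↑S : Set (Submodule ℂ (Fin n → ℂ))) ⊆ arrA n r then
      OrderDual.toDual ⟨sInf (↑S : Set (Submodule ℂ (Fin n → ℂ))), ↑S, hS, rfl⟩ else bot
    with helf
  have hvalelf : ∀ S ∈ AF.powerset, valL (elf S) = sInf (↑S : Set (Submodule ℂ (Fin n → ℂ))) := by
    intro S hS
    show valL (if hS : (↑S : Set (Submodule ℂ (Fin n → ℂ))) ⊆ arrA n r then
      OrderDual.toDual ⟨sInf (↑S : Set (Submodule ℂ (Fin n → ℂ))), ↑S, hS, rfl⟩ else bot) = _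
    rw [dif_pos (hsub S hS)]
    rfl
  have hle : ∀ (S : Finset (Submodule ℂ (Fin n → ℂ))) (hS : S ∈ AF.powerset) (x : L),
      (elf S ≤ x ↔ valL x ≤ sInf (↑S : Set (Submodule ℂ (Fin n → ℂ)))) := by
    intro S hS x
    show (if hS : (↑S : Set (Submodule ℂ (Fin n → ℂ))) ⊆ arrA n r then
      OrderDual.toDual ⟨sInf (↑S : Set (Submodule ℂ (Fin n → ℂ))), ↑S, hS, rfl⟩ else bot) ≤ x ↔ _
    rw [dif_pos (hsub S hS)]
    exact Iff.rfl
  -- the candidate function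
  set g : L → ℤ := fun x => ∑ S ∈ AF.powerset,
      (-1 : ℤ) ^ S.card * (if sInf (↑S : Set (Submodule ℂ (Fin n → ℂ))) = valL x then 1 else 0)
    with hg_def
  have hb : ∀ x : L, bot ≤ x := by
    intro x
    show valL x ≤ (⊤ : Submodule ℂ (Fin n → ℂ))
    exact le_top
  have hg : ∀ x : L, (letI : Fintype L := Fintype.ofFinite L;
      ∑ y : L, (if y ≤ x then g y else 0)) = if x = bot then 1 else 0 := by
    intro x
    letI : Fintype L := Fintype.ofFinite L
    have hstep1 : ∀ y : L, (if y ≤ x then g y else 0) =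
        ∑ S ∈ AF.powerset, (if y ≤ x then
          (-1 : ℤ) ^ S.card *
            (if sInf (↑S : Set (Submodule ℂ (Fin n → ℂ))) = valL y then 1 else 0) else 0) := by
      intro y
      by_cases hyx : y ≤ x
      · rw [if_pos hyx, hg_def]
        apply Finset.sum_congr rfl
        intro S _
        rw [if_pos hyx]
      · rw [if_neg hyx, Finset.sum_congr rfl (fun S _ => if_neg hyx), Finset.sum_const_zero]
    rw [Finset.sum_congr rfl (fun y _ => hstep1 y), Finset.sum_comm]
    have hinner : ∀ S ∈ AF.powerset,
        (∑ y : L, (if y ≤ x then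
          (-1 : ℤ) ^ S.card *
            (if sInf (↑S : Set (Submodule ℂ (Fin n → ℂ))) = valL y then 1 else 0) else 0))
        = (if elf S ≤ x then (-1 : ℤ) ^ S.card else 0) := by
      intro S hS
      rw [Finset.sum_eq_single (elf S)]
      · by_cases hex : elf S ≤ x
        · rw [if_pos hex, if_pos hex, if_pos (hvalelf S hS).symm, mul_one]
        · rw [if_neg hex, if_neg hex]
      · intro y _ hy
        by_cases hyx : y ≤ x
        · rw [if_pos hyx, if_neg, mul_zero]
          intro he
          exact hy (hvalinj (show valL (elf S) = valL y by rw [hvalelf S hS, ← he])).symm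
        · rw [if_neg hyx]
      · intro hmem
        exact absurd (Finset.mem_univ _) hmem
    rw [Finset.sum_congr rfl hinner]
    -- now reduce to the powerset sum over AFx
    set AFx : Finset (Submodule ℂ (Fin n → ℂ)) := AF.filter (fun H => valL x ≤ H) with hAFx
    have hcond : ∀ S ∈ AF.powerset, (elf S ≤ x ↔ S ⊆ AFx) := by
      intro S hS
      rw [hle S hS x]
      constructor
      · intro h H hH
        rw [hAFx, Finset.mem_filter]
        refine ⟨Finset.mem_powerset.mp hS hH, le_trans h (sInf_le ?_)⟩
        exact Finset.mem_coe.mpr hH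
      · intro h
        apply le_sInf
        intro b hb2
        exact (Finset.mem_filter.mp (h (Finset.mem_coe.mp hb2))).2
    have h4 : ∑ S ∈ AF.powerset, (if elf S ≤ x then (-1 : ℤ) ^ S.card else 0)
        = ∑ S ∈ AF.powerset, (if S ⊆ AFx then (-1 : ℤ) ^ S.card else 0) := by
      apply Finset.sum_congr rfl
      intro S hS
      by_cases hc : S ⊆ AFx
      · rw [if_pos hc, if_pos ((hcond S hS).mpr hc)]
      · rw [if_neg hc, if_neg (fun hx2 => hc ((hcond S hS).mp hx2))]
    rw [h4, Finset.sum_ite, Finset.sum_const_zero, add_zero]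
    have h5 : AF.powerset.filter (· ⊆ AFx) = AFx.powerset := by
      ext S
      simp only [Finset.mem_filter, Finset.mem_powerset]
      exact ⟨fun h => h.2, fun h => ⟨h.trans (Finset.filter_subset _ _), h⟩⟩
    rw [h5, Finset.sum_powerset_neg_one_pow_card]
    have h6 : (AFx = ∅) ↔ (x = bot) := by
      constructor
      · intro hempty
        obtain ⟨T, hT, hTeq⟩ := (OrderDual.ofDual x).2
        have hTempty : T = ∅ := by
          rw [Set.eq_empty_iff_forall_notMem]
          intro H hH
          have hHAF : H ∈ AF := Finset.mem_coe.mp (hAF ▸ (hT hH))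
          have hxH : valL x ≤ H := by
            rw [hvalL]
            show (OrderDual.ofDual x).1 ≤ H
            rw [hTeq]
            exact sInf_le hH
          have : H ∈ AFx := by rw [hAFx, Finset.mem_filter]; exact ⟨hHAF, hxH⟩
          rw [hempty] at this
          exact absurd this (Finset.notMem_empty H)
        apply hvalinj
        show (OrderDual.ofDual x).1 = (⊤ : Submodule ℂ (Fin n → ℂ))
        rw [hTeq, hTempty, sInf_empty]
      · intro hxbot
        rw [hAFx, Finset.filter_eq_empty_iff]
        intro H hH
        rw [hxbot]
        intro htop
        have : H = ⊤ := top_le_iff.mp htop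
        rw [this] at hH
        exact Dow.top_not_mem_arrA hr (hAF ▸ Finset.mem_coe.mpr hH)
    exact if_congr h6 rfl rfl
  -- apply the uniqueness lemma
  rw [Dow.mob_eq_of_sum bot hb g (by convert hg)]
  -- compute g at the top element
  have hvtop : valL (OrderDual.toDual ⟨sInf (arrA n r), arrA n r, subset_rfl, rfl⟩) =
      sInf (arrA n r) := rfl
  rw [hg_def]
  simp only [hvtop]
  rw [Dow.sInf_arrA_eq_bot n r]
  -- indicator via kf
  have hbotiff : ∀ S ∈ AF.powerset,
      (sInf (↑S : Set (Submodule ℂ (Fin n → ℂ))) = ⊥) ↔ kf S = 0 := by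
    intro S hS
    rw [Dow.submodule_eq_bot_iff, hVs S (hsub S hS), Dow.Vs_eq_zero_iff (hval S (hsub S hS))]
  have hgtop : ∑ S ∈ AF.powerset,
      (-1 : ℤ) ^ S.card *
        (if sInf (↑S : Set (Submodule ℂ (Fin n → ℂ))) = ⊥ then 1 else 0)
      = ∑ S ∈ AF.powerset, (-1 : ℤ) ^ S.card * (0 : ℤ) ^ (kf S) := by
    apply Finset.sum_congr rfl
    intro S hS
    rw [Dow.zero_pow_ite]
    exact congrArg _ (if_congr (hbotiff S hS) rfl rfl)
  rw [hgtop]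
  -- the polynomial identity
  set p : Polynomial ℤ :=
    (∑ S ∈ AF.powerset, Polynomial.C ((-1 : ℤ) ^ S.card) * Polynomial.X ^ (kf S)) -
      ∏ i ∈ Finset.range n, (Polynomial.X - Polynomial.C (1 + (i : ℤ) * r)) with hp
  have hf : ∀ m : ℕ, 0 < m → ∀ S ∈ AF.powerset, Nat.card {v : Fin n → ℂ //
      v ∈ (sInf (↑S : Set (Submodule ℂ (Fin n → ℂ))) : Submodule ℂ (Fin n → ℂ)) ∧
      ∀ i, v i ∈ Dow.PF (m * r)} = (m * r + 1) ^ kf S := by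
    intro m hm S hS
    have hmr : 0 < m * r := Nat.mul_pos hm hr
    have hmemiff : ∀ v : Fin n → ℂ,
        (v ∈ (sInf (↑S : Set (Submodule ℂ (Fin n → ℂ))) : Submodule ℂ (Fin n → ℂ)) ∧
          ∀ i, v i ∈ Dow.PF (m * r)) ↔
        (v ∈ Dow.Vs (σf S) (cf S) ∧ ∀ i, v i ∈ {z : ℂ | z ∈ Dow.PF (m * r)}) := by
      intro v
      rw [← hVs S (hsub S hS)]
      exact Iff.rfl
    rw [Nat.card_congr (Equiv.subtypeEquivRight hmemiff)]
    rw [Dow.card_Vs_inter (hval S (hsub S hS)) {z : ℂ | z ∈ Dow.PF (m * r)}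
      ((Dow.mem_PF hmr).mpr (Or.inl rfl))
      (fun ζ z hζ hz => by
        rcases (Dow.mem_PF hmr).mp hz with rfl | hz1
        · rw [mul_zero]
          exact (Dow.mem_PF hmr).mpr (Or.inl rfl)
        · refine (Dow.mem_PF hmr).mpr (Or.inr ?_)
          rw [mul_pow, hz1, mul_one, mul_comm m r, pow_mul, hζ, one_pow])]
    congr 1
    have : {z : ℂ | z ∈ Dow.PF (m * r)} = (↑(Dow.PF (m * r)) : Set ℂ) := by
      ext z
      simp
    rw [this, Nat.card_coe_set_eq, Set.ncard_coe_finset, Dow.card_PF hmr]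
  have hroot : ∀ m : ℕ, n ≤ m → 0 < m → p.IsRoot ((m : ℤ) * r + 1) := by
    intro m hnm hm
    rw [Polynomial.IsRoot, hp, Polynomial.eval_sub, Polynomial.eval_finset_sum,
      Polynomial.eval_prod]
    have e1 : ∀ S ∈ AF.powerset,
        Polynomial.eval ((m : ℤ) * r + 1) (Polynomial.C ((-1 : ℤ) ^ S.card) *
          Polynomial.X ^ (kf S)) = (-1 : ℤ) ^ S.card * ((m : ℤ) * r + 1) ^ (kf S) := by
      intro S _
      rw [Polynomial.eval_mul, Polynomial.eval_C, Polynomial.eval_pow, Polynomial.eval_X]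
    rw [Finset.sum_congr rfl e1]
    have e2 := Dow.ie_sum hr AF hAF m hm kf (hf m hm)
    rw [e2]
    have e3 : ∀ i ∈ Finset.range n,
        Polynomial.eval ((m : ℤ) * r + 1) (Polynomial.X - Polynomial.C (1 + (i : ℤ) * r))
          = ((m : ℤ) - i) * r := by
      intro i _
      rw [Polynomial.eval_sub, Polynomial.eval_X, Polynomial.eval_C]
      ring
    rw [Finset.prod_congr rfl e3, Finset.prod_mul_distrib, Finset.prod_const]
    have e4 : ∏ i ∈ Finset.range n, ((m : ℤ) - i) = (m.descFactorial n : ℤ) := by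
      rw [Nat.descFactorial_eq_prod_range, Nat.cast_prod]
      apply Finset.prod_congr rfl
      intro i hi
      have : i ≤ m := le_trans (Nat.le_of_lt_succ (Nat.lt_succ_of_lt (Finset.mem_range.mp hi)))
        hnm
      rw [Nat.cast_sub this]
    rw [e4, Finset.card_range]
    ring
  have hp0 : p = 0 := by
    apply Polynomial.eq_zero_of_infinite_isRoot
    apply Set.infinite_of_injective_forall_mem
      (f := fun j : ℕ => (((n + 1 + j : ℕ) : ℤ) * r + 1))
      (hi := ?_) (hf := ?_)
    · intro a b hab
      have h1 : ((n + 1 + a : ℕ) : ℤ) * r = ((n + 1 + b : ℕ) : ℤ) * r := by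
        have h2 : ((n + 1 + a : ℕ) : ℤ) * r + 1 = ((n + 1 + b : ℕ) : ℤ) * r + 1 := hab
        linarith
      have hr0 : (r : ℤ) ≠ 0 := Int.natCast_ne_zero.mpr hr.ne'
      have h3 : ((n + 1 + a : ℕ) : ℤ) = ((n + 1 + b : ℕ) : ℤ) := mul_right_cancel₀ hr0 h1
      have h4 : n + 1 + a = n + 1 + b := Nat.cast_injective h3
      omega
    · intro j
      exact hroot (n + 1 + j) (by omega) (by omega)
  have heval0 := congrArg (Polynomial.eval (0 : ℤ)) hp0
  rw [hp, Polynomial.eval_sub, Polynomial.eval_finset_sum, Polynomial.eval_prod,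
    Polynomial.eval_zero, sub_eq_zero] at heval0
  have e5 : ∀ S ∈ AF.powerset,
      Polynomial.eval (0 : ℤ) (Polynomial.C ((-1 : ℤ) ^ S.card) * Polynomial.X ^ (kf S))
        = (-1 : ℤ) ^ S.card * (0 : ℤ) ^ (kf S) := by
    intro S _
    rw [Polynomial.eval_mul, Polynomial.eval_C, Polynomial.eval_pow, Polynomial.eval_X]
  rw [Finset.sum_congr rfl e5] at heval0
  rw [heval0]
  have e6 : ∀ i ∈ Finset.range n,
      Polynomial.eval (0 : ℤ) (Polynomial.X - Polynomial.C (1 + (i : ℤ) * r))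
        = (-1) * ((i * r + 1 : ℕ) : ℤ) := by
    intro i _
    rw [Polynomial.eval_sub, Polynomial.eval_X, Polynomial.eval_C]
    push_cast
    ring
  rw [Finset.prod_congr rfl e6, Finset.prod_mul_distrib, Finset.prod_const, Finset.card_range]
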